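/- Let 𝔥 be a multisegment and let Δ, Δ' be segments admissible to 𝔥 with a(Δ) = a(Δ'), and such that Δ' is admissible to 𝔯(Δ,𝔥) and Δ is admissible to 𝔯(Δ',𝔥). Then Υ(Δ, 𝔥) + Υ(Δ', 𝔯(Δ, 𝔥)) = Υ(Δ', 𝔥) + Υ(Δ, 𝔯(Δ', 𝔥)) as multisets of segments. -/

import Mathlib

/-- `s ≺^L t`: compare left endpoints first, then right endpoints. -/
def precL (s t : ℤ × ℤ) : Prop := s.1 < t.1 ∨ (s.1 = t.1 ∧ s.2 < t.2)

/-- The multiset `{[x,y]}` if `x ≤ y`, empty otherwise. -/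
def seg? (x y : ℤ) : Multiset (ℤ × ℤ) := if x ≤ y then {(x, y)} else 0

/-- `Δ = [a,b]` is admissible to the multisegment `h`: `h` contains a segment
`[a,c]` with `c ≥ b`. -/
def Admissible (a b : ℤ) (h : Multiset (ℤ × ℤ)) : Prop := ∃ c : ℤ, (a, c) ∈ h ∧ b ≤ c

/-- `L = [Δ₁, ..., Δ_r]` is the removal sequence for `(Δ, h)`, `Δ = [a,b]`:
`Δ₁` is the shortest segment of `h` with left endpoint `a` and right endpoint `≥ b`;
recursively, `Δ_{i+1}` is the `≺^L`-minimal segment of `h` with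
`a(Δ_i) < a(Δ_{i+1})` and `b ≤ b(Δ_{i+1}) < b(Δ_i)`; the process stops when no
such segment exists. -/
def IsRemovalSeq (a b : ℤ) (h : Multiset (ℤ × ℤ)) (L : List (ℤ × ℤ)) : Prop :=
  L ≠ [] ∧
  ((L[0]!).1 = a ∧ L[0]! ∈ h ∧ b ≤ (L[0]!).2 ∧
    ∀ c : ℤ, (a, c) ∈ h → b ≤ c → (L[0]!).2 ≤ c) ∧
  (∀ i : ℕ, i + 1 < L.length →
    L[i+1]! ∈ h ∧ (L[i]!).1 < (L[i+1]!).1 ∧ b ≤ (L[i+1]!).2 ∧ (L[i+1]!).2 < (L[i]!).2 ∧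
    ∀ s ∈ h, (L[i]!).1 < s.1 → b ≤ s.2 → s.2 < (L[i]!).2 → ¬ precL s (L[i+1]!)) ∧
  (∀ s ∈ h, ¬ ((L[L.length - 1]!).1 < s.1 ∧ b ≤ s.2 ∧ s.2 < (L[L.length - 1]!).2))

/-- `𝔯(Δ, h)` computed from the removal sequence `L = [Δ₁,...,Δ_r]` for
`(Δ, h)`, `Δ = [a,b]`: remove the `Δ_i` from `h` and add the truncated segments
`Δ_i^{tr} = [a(Δ_{i+1}), b(Δ_i)]` for `i < r` and `Δ_r^{tr} = [b(Δ_r)+1, b]`,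
dropping empty segments. -/
def removalResult (b : ℤ) (h : Multiset (ℤ × ℤ)) (L : List (ℤ × ℤ)) : Multiset (ℤ × ℤ) :=
  (h - (L : Multiset (ℤ × ℤ))) +
    (Finset.range (L.length - 1)).sum (fun i => seg? ((L[i+1]!).1) ((L[i]!).2)) +
    seg? ((L[L.length - 1]!).2 + 1) b

/-- Key structural lemma: the segments with left endpoint `a` in `removalResult b h L`
are exactly those of `h` minus one copy of the head of `L`. -/
lemma mem_removalResult_left_iff (a b : ℤ) (h : Multiset (ℤ × ℤ)) (L : List (ℤ × ℤ))
    (hL : IsRemovalSeq a b h L) (c : ℤ) :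
    (a, c) ∈ removalResult b h L ↔ (a, c) ∈ h - {L[0]!} := by
  obtain ⟨hne, hhead, hstep, _⟩ := hL
  -- first coordinates of later elements are > a
  have ha : ∀ i, i < L.length → a ≤ (L[i]!).1 := by
    intro i
    induction i with
    | zero => intro _; rw [hhead.1]
    | succ n ih =>
      intro hi
      have h1 := (hstep n hi).2.1
      have h2 := ih (Nat.lt_of_succ_lt hi)
      linarith
  have halt : ∀ i, i + 1 < L.length → a < (L[i+1]!).1 := by
    intro i hi
    have := (hstep i hi).2.1
    have := ha i (Nat.lt_of_succ_lt hi)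
    linarith
  -- all right endpoints are ≥ b
  have hb : ∀ i, i < L.length → b ≤ (L[i]!).2 := by
    intro i hi
    cases i with
    | zero => exact hhead.2.2.1
    | succ n => exact (hstep n hi).2.2.1
  have hlen : 0 < L.length := List.length_pos_iff.2 hne
  have hlast : b ≤ (L[L.length - 1]!).2 := hb _ (Nat.sub_lt hlen one_pos)
  -- the final truncation is empty
  have hseg0 : seg? ((L[L.length - 1]!).2 + 1) b = 0 := by
    rw [seg?, if_neg]; omega
  -- (a, c) is in no middle truncation
  have hmid : ∀ i ∈ Finset.range (L.length - 1),
      (a, c) ∉ seg? ((L[i+1]!).1) ((L[i]!).2) := by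
    intro i hi hmem
    rw [seg?] at hmem
    split at hmem
    · rw [Multiset.mem_singleton, Prod.ext_iff] at hmem
      have := halt i (by have := Finset.mem_range.1 hi; omega)
      dsimp only at hmem
      omega
    · exact absurd hmem (Multiset.notMem_zero _)
  rw [removalResult, hseg0, add_zero, Multiset.mem_add]
  have hsum : (a, c) ∉ (Finset.range (L.length - 1)).sum
      (fun i => seg? ((L[i+1]!).1) ((L[i]!).2)) := by
    rw [Multiset.mem_sum]
    rintro ⟨i, hi, hmem⟩
    exact hmid i hi hmem
  -- counts in ↑L vs {L[0]!}
  have hcount : Multiset.count (a, c) (L : Multiset (ℤ × ℤ)) =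
      Multiset.count (a, c) ({L[0]!} : Multiset (ℤ × ℤ)) := by
    obtain ⟨x, t, rfl⟩ := List.exists_cons_of_ne_nil hne
    have hx0 : (x :: t)[0]! = x := by simp
    have hnt : (a, c) ∉ t := by
      intro hmem
      obtain ⟨i, hilt, hig⟩ := List.mem_iff_getElem.1 hmem
      have hi1 : i + 1 < (x :: t).length := by simp; omega
      have h1 := halt i hi1
      have h2 : ((x :: t)[i+1]!) = t[i] := by
        rw [getElem!_pos (x :: t) (i+1) hi1]; simp
      rw [h2, hig] at h1
      simp at h1
    rw [hx0]
    rw [← Multiset.cons_coe, Multiset.count_cons]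
    have : Multiset.count (a, c) (t : Multiset (ℤ × ℤ)) = 0 :=
      Multiset.count_eq_zero.2 (by simpa using hnt)
    rw [this, Multiset.count_singleton]
    split <;> simp_all
  constructor
  · rintro (hm | hm)
    · rw [← Multiset.count_pos, Multiset.count_sub] at hm ⊢
      omega
    · exact absurd hm hsum
  · intro hm
    left
    rw [← Multiset.count_pos, Multiset.count_sub] at hm ⊢
    omega

lemma head_pair (a b : ℤ) (h : Multiset (ℤ × ℤ)) (L : List (ℤ × ℤ))
    (hL : IsRemovalSeq a b h L) : L[0]! = (a, (L[0]!).2) :=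
  Prod.ext hL.2.1.1 rfl

/-- The core argument, assuming `b ≤ b'`. -/
lemma upsilon_symmetry_core (h : Multiset (ℤ × ℤ)) (a b b' : ℤ) (hbb : b ≤ b')
    (L M : List (ℤ × ℤ)) (hL : IsRemovalSeq a b h L) (hM : IsRemovalSeq a b' h M)
    (L2 M2 : List (ℤ × ℤ))
    (hL2 : IsRemovalSeq a b' (removalResult b h L) L2)
    (hM2 : IsRemovalSeq a b (removalResult b' h M) M2) :
    ({L[0]!} + {L2[0]!} : Multiset (ℤ × ℤ)) = {M[0]!} + {M2[0]!} := by
  obtain ⟨c₁, eL⟩ : ∃ c, L[0]! = (a, c) := ⟨_, head_pair a b h L hL⟩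
  obtain ⟨γ₁, eM⟩ : ∃ c, M[0]! = (a, c) := ⟨_, head_pair a b' h M hM⟩
  obtain ⟨δ, eL2⟩ : ∃ c, L2[0]! = (a, c) := ⟨_, head_pair a b' _ L2 hL2⟩
  obtain ⟨δ', eM2⟩ : ∃ c, M2[0]! = (a, c) := ⟨_, head_pair a b _ M2 hM2⟩
  -- basic facts
  have hc₁h : (a, c₁) ∈ h := by rw [← eL]; exact hL.2.1.2.1
  have hc₁b : b ≤ c₁ := by have := hL.2.1.2.2.1; rwa [eL] at this
  have hc₁min : ∀ c : ℤ, (a, c) ∈ h → b ≤ c → c₁ ≤ c := by have := hL.2.1.2.2.2; rwa [eL] at this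
  have hγ₁h : (a, γ₁) ∈ h := by rw [← eM]; exact hM.2.1.2.1
  have hγ₁b : b' ≤ γ₁ := by have := hM.2.1.2.2.1; rwa [eM] at this
  have hγ₁min : ∀ c : ℤ, (a, c) ∈ h → b' ≤ c → γ₁ ≤ c := by have := hM.2.1.2.2.2; rwa [eM] at this
  -- translate facts about L2, M2 via the membership lemma
  have hiffL := mem_removalResult_left_iff a b h L hL
  have hiffM := mem_removalResult_left_iff a b' h M hM
  rw [eL] at hiffL
  rw [eM] at hiffM
  have hδmem : (a, δ) ∈ h - {(a, c₁)} := by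
    rw [← hiffL]; rw [← eL2]; exact hL2.2.1.2.1
  have hδb : b' ≤ δ := by have := hL2.2.1.2.2.1; rwa [eL2] at this
  have hδmin : ∀ c : ℤ, (a, c) ∈ h - {(a, c₁)} → b' ≤ c → δ ≤ c := by
    intro c hc hbc
    have := hL2.2.1.2.2.2 c ((hiffL c).2 hc) hbc; rwa [eL2] at this
  have hδ'mem : (a, δ') ∈ h - {(a, γ₁)} := by
    rw [← hiffM]; rw [← eM2]; exact hM2.2.1.2.1
  have hδ'b : b ≤ δ' := by have := hM2.2.1.2.2.1; rwa [eM2] at this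
  have hδ'min : ∀ c : ℤ, (a, c) ∈ h - {(a, γ₁)} → b ≤ c → δ' ≤ c := by
    intro c hc hbc
    have := hM2.2.1.2.2.2 c ((hiffM c).2 hc) hbc; rwa [eM2] at this
  have sub_mem : ∀ (p q : ℤ × ℤ), p ∈ h - {q} → p ∈ h := fun p q hp =>
    Multiset.mem_of_le (Multiset.sub_le_self _ _) hp
  have mem_sub_of_ne : ∀ (p q : ℤ × ℤ), p ∈ h → p ≠ q → p ∈ h - {q} := by
    intro p q hp hne
    rw [← Multiset.count_pos, Multiset.count_sub, Multiset.count_singleton, if_neg hne]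
    have := Multiset.count_pos.2 hp
    omega
  rw [eL, eM, eL2, eM2]
  by_cases hcase : b' ≤ c₁
  · -- c₁ = γ₁ and δ = δ'
    have h1 : γ₁ ≤ c₁ := hγ₁min c₁ hc₁h hcase
    have h2 : c₁ ≤ γ₁ := hc₁min γ₁ hγ₁h (le_trans hbb hγ₁b)
    have hcγ : c₁ = γ₁ := le_antisymm h2 h1
    subst hcγ
    -- δ' ≥ b'
    have hδ'b' : b' ≤ δ' := by
      by_contra hlt
      push_neg at hlt
      have := hc₁min δ' (sub_mem _ _ hδ'mem) hδ'b
      omega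
    have h3 : δ ≤ δ' := hδmin δ' hδ'mem hδ'b'
    have h4 : δ' ≤ δ := hδ'min δ hδmem (le_trans hbb hδb)
    rw [le_antisymm h3 h4]
  · push_neg at hcase
    -- δ = γ₁ and δ' = c₁
    have hne1 : γ₁ ≠ c₁ := by omega
    have h5 : δ ≤ γ₁ := hδmin γ₁ (mem_sub_of_ne _ _ hγ₁h (by simp [hne1])) hγ₁b
    have h6 : γ₁ ≤ δ := hγ₁min δ (sub_mem _ _ hδmem) hδb
    have hδγ : δ = γ₁ := le_antisymm h5 h6
    have hne2 : c₁ ≠ γ₁ := by omega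
    have h7 : δ' ≤ c₁ := hδ'min c₁ (mem_sub_of_ne _ _ hc₁h (by simp [hne2])) hc₁b
    have h8 : c₁ ≤ δ' := hc₁min δ' (sub_mem _ _ hδ'mem) hδ'b
    have hδ'c : δ' = c₁ := le_antisymm h7 h8
    rw [hδγ, hδ'c, add_comm]

/-- (Lemma 8.10.) Let `Δ = [a,b]` and `Δ' = [a,b']` have the same left endpoint,
both admissible to `𝔥`, with `Δ'` admissible to `𝔯(Δ,𝔥)` and `Δ` admissible to
`𝔯(Δ',𝔥)`. Then `Υ(Δ, 𝔥) + Υ(Δ', 𝔯(Δ, 𝔥)) = Υ(Δ', 𝔥) + Υ(Δ, 𝔯(Δ', 𝔥))` as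
multisets of segments. -/
theorem upsilon_symmetry (h : Multiset (ℤ × ℤ)) (a b b' : ℤ)
    (hsegs : ∀ s ∈ h, s.1 ≤ s.2)
    (hadm : Admissible a b h) (hadm' : Admissible a b' h)
    (L M : List (ℤ × ℤ)) (hL : IsRemovalSeq a b h L) (hM : IsRemovalSeq a b' h M)
    (hadm2 : Admissible a b' (removalResult b h L))
    (hadm2' : Admissible a b (removalResult b' h M))
    (L2 M2 : List (ℤ × ℤ))
    (hL2 : IsRemovalSeq a b' (removalResult b h L) L2)
    (hM2 : IsRemovalSeq a b (removalResult b' h M) M2) :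
    ({L[0]!} + {L2[0]!} : Multiset (ℤ × ℤ)) = {M[0]!} + {M2[0]!} := by
  rcases le_total b b' with hbb | hbb
  · exact upsilon_symmetry_core h a b b' hbb L M hL hM L2 M2 hL2 hM2
  · exact (upsilon_symmetry_core h a b' b hbb M L hM hL M2 L2 hM2 hL2).symm
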